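/- Let 0 < r < R and let T, Q, S0, Δ_T, Δ_Q be as for the torus–quadric intersection. For a real point (x0,y0): S0(x0,y0) = 0, Δ_T(x0,y0) = 0, and Δ_Q(x0,y0) ≥ 0 hold if and only if q0(x0,y0) = 0 and Δ_T(x0,y0) = 0. -/

import Mathlib

/-- The resultant of `z^4 + p2 z^2 + p0` and `z^2 + q1 z + q0` with respect to `z`,
as the determinant of the Sylvester matrix. -/
def sylvRes (p2 p0 q1 q0 : ℝ) : ℝ :=
  (!![(1 : ℝ), 0, p2, 0, p0, 0;
      0, 1, 0, p2, 0, p0;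
      1, q1, q0, 0, 0, 0;
      0, 1, q1, q0, 0, 0;
      0, 0, 1, q1, q0, 0;
      0, 0, 0, 1, q1, q0]).det

set_option maxRecDepth 4000 in
lemma sylvRes_p0_zero (p2 q1 q0 : ℝ) :
    sylvRes p2 0 q1 q0 = q0 ^ 2 * ((q0 - p2) ^ 2 + q1 ^ 2 * p2) := by
  simp [sylvRes, Matrix.det_succ_row_zero, Fin.sum_univ_succ, Fin.succAbove]
  ring

/-- For a real point `(x0,y0)`: `S0 = 0`, `Δ_T = 0` and `Δ_Q ≥ 0` hold iff
`q0(x0,y0) = 0` and `Δ_T(x0,y0) = 0`. -/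
theorem stmt13 (R r a b d e f g h i j x0 y0 : ℝ) (hr : 0 < r) (hrR : r < R)
    (p2 p0 q1 q0 : ℝ)
    (hp2 : p2 = 2 * (R ^ 2 - r ^ 2 + x0 ^ 2 + y0 ^ 2))
    (hp0 : p0 = (R ^ 2 + 2 * R * r + r ^ 2 - x0 ^ 2 - y0 ^ 2)
      * (R ^ 2 - 2 * R * r + r ^ 2 - x0 ^ 2 - y0 ^ 2))
    (hq1 : q1 = e * x0 + f * y0 + i)
    (hq0 : q0 = a * x0 ^ 2 + b * y0 ^ 2 + d * x0 * y0 + g * x0 + h * y0 + j) :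
    (sylvRes p2 p0 q1 q0 = 0 ∧ p0 = 0 ∧ q1 ^ 2 - 4 * q0 ≥ 0)
      ↔ (q0 = 0 ∧ p0 = 0) := by
  have hp2pos : 0 < p2 := by nlinarith [sq_nonneg x0, sq_nonneg y0]
  constructor
  · rintro ⟨hS, hP, hD⟩
    refine ⟨?_, hP⟩
    rw [hP, sylvRes_p0_zero] at hS
    rcases mul_eq_zero.mp hS with h1 | h2
    · exact pow_eq_zero_iff (by norm_num) |>.mp h1
    · -- (q0 - p2)^2 + q1^2 * p2 = 0 forces q1 = 0, q0 = p2, contradicting Δ_Q ≥ 0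
      have hq1z : q1 = 0 := by
        nlinarith [sq_nonneg (q0 - p2), sq_nonneg q1]
      have hq0p2 : q0 = p2 := by nlinarith [sq_nonneg q1]
      nlinarith
  · rintro ⟨hq, hP⟩
    refine ⟨?_, hP, by nlinarith [sq_nonneg q1]⟩
    rw [hP, sylvRes_p0_zero, hq]
    ring
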